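/- Let u, v ∈ (ℝ_{≥0})^N be non-zero non-negative vectors satisfying (‖u‖₁/‖u‖_∞)(‖v‖₁/‖v‖_∞) ≥ CN with C ≥ 1, let D be an N×N doubly stochastic matrix, and define the bilinear form B(x,y) = ∑_{i≠j} D_{ij} x_i y_j. If P is a uniformly random N×N permutation matrix, then for any γ > 0, Pr[B(u, Pv) ≥ e^γ ‖u‖₁‖v‖₁/N] ≤ N² exp(−γ²C/2). -/

import Mathlib

open scoped Classical

open Finset Nat


lemma amgm (m : ℕ) (u z : ℝ) (hu : 0 ≤ u) (hz : 0 ≤ z) :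
    u ^ m * z ≤ (((m : ℝ) * u + z) / (m + 1)) ^ (m + 1) := by
  rcases eq_or_lt_of_le hu with h | h
  · rw [← h]
    cases m with
    | zero => simp
    | succ m =>
      rw [zero_pow (by omega), zero_mul]
      positivity
  · have hm1 : (0:ℝ) < (m:ℝ) + 1 := by positivity
    have hden : (0:ℝ) < ((m:ℝ)+1) * u := by positivity
    have hx : (-2 : ℝ) ≤ (z - u) / (((m:ℝ)+1) * u) := by
      have : (-1 : ℝ) ≤ (z - u) / (((m:ℝ)+1) * u) := by
        rw [le_div_iff₀ hden]
        nlinarith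
      linarith
    have hb := one_add_mul_le_pow hx (m+1)
    have h1 : (1 : ℝ) + ((m:ℕ)+1 : ℕ) * ((z - u) / (((m:ℝ)+1) * u)) = z / u := by
      push_cast
      field_simp
      ring
    have h2 : (1 : ℝ) + (z - u) / (((m:ℝ)+1) * u) = ((m:ℝ) * u + z) / (((m:ℝ)+1) * u) := by
      field_simp
      ring
    rw [h1, h2] at hb
    have hu1 : (0:ℝ) < u ^ (m+1) := by positivity
    have := mul_le_mul_of_nonneg_right hb (le_of_lt hu1)
    calc u ^ m * z = z / u * u ^ (m+1) := by
          field_simp; ring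
      _ ≤ (((m:ℝ) * u + z) / (((m:ℝ)+1) * u)) ^ (m+1) * u ^ (m+1) := this
      _ = (((m : ℝ) * u + z) / (m + 1)) ^ (m + 1) := by
          rw [← mul_pow]
          congr 1
          field_simp

lemma stepineq (n m : ℕ) (hmn : m ≤ n) (u t : ℝ) (hu : 0 ≤ u) (ht : 0 ≤ t) :
    (n.choose (m+1) : ℝ) * u ^ (m+1) + (n.choose m : ℝ) * t * u ^ m ≤
      ((n+1).choose (m+1) : ℝ) * (((n:ℝ) * u + t) / ((n:ℝ)+1)) ^ (m+1) := by
  set z : ℝ := (((n:ℝ) - (m:ℝ)) * u + ((m:ℝ)+1) * t) / ((n:ℝ)+1) with hzdef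
  have hnm : (0:ℝ) ≤ (n:ℝ) - (m:ℝ) := by
    have : (m:ℝ) ≤ (n:ℝ) := by exact_mod_cast hmn
    linarith
  have hz : 0 ≤ z := by
    apply div_nonneg
    · positivity
    · positivity
  have id2 : ((n+1).choose (m+1)) * (m + 1) = (n+1) * (n.choose m) := by
    have := Nat.add_one_mul_choose_eq n m
    simpa [Nat.succ_eq_add_one, mul_comm] using this.symm
  have id1 : ((n+1).choose (m+1)) * (n - m) = (n+1) * (n.choose (m+1)) := by
    have h1 := Nat.choose_succ_right_eq (n+1) (m+1)
    have h2 := Nat.add_one_mul_choose_eq n (m+1)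
    have hsub : n + 1 - (m+1) = n - m := by omega
    rw [hsub] at h1
    rw [← h1, ← h2]
  have id1' : ((n+1).choose (m+1) : ℝ) * ((n:ℝ) - (m:ℝ)) = ((n:ℝ)+1) * (n.choose (m+1) : ℝ) := by
    have h : (((n+1).choose (m+1) * (n-m) : ℕ) : ℝ) = (((n+1) * n.choose (m+1) : ℕ) : ℝ) := by
      exact_mod_cast congrArg (fun x : ℕ => (x:ℝ)) id1
    push_cast [Nat.cast_sub hmn] at h
    linarith
  have id2' : ((n+1).choose (m+1) : ℝ) * ((m:ℝ) + 1) = ((n:ℝ)+1) * (n.choose m : ℝ) := by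
    exact_mod_cast congrArg (fun x : ℕ => (x:ℝ)) id2
  have hne : ((n:ℝ)+1) ≠ 0 := by positivity
  have hlhs : (n.choose (m+1) : ℝ) * u ^ (m+1) + (n.choose m : ℝ) * t * u ^ m
      = ((n+1).choose (m+1) : ℝ) * (u ^ m * z) := by
    rw [hzdef]
    field_simp
    linear_combination (-(u ^ (m+1))) * id1' + (-(t * u ^ m)) * id2'
  have hmz : ((m:ℝ) * u + z) / ((m:ℝ)+1) = ((n:ℝ) * u + t) / ((n:ℝ)+1) := by
    rw [hzdef]
    field_simp
    ring
  calc (n.choose (m+1) : ℝ) * u ^ (m+1) + (n.choose m : ℝ) * t * u ^ m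
      = ((n+1).choose (m+1) : ℝ) * (u ^ m * z) := hlhs
    _ ≤ ((n+1).choose (m+1) : ℝ) * (((m:ℝ) * u + z) / ((m:ℝ)+1)) ^ (m+1) := by
        apply mul_le_mul_of_nonneg_left (amgm m u z hu hz) (by positivity)
    _ = ((n+1).choose (m+1) : ℝ) * (((n:ℝ) * u + t) / ((n:ℝ)+1)) ^ (m+1) := by rw [hmz]

lemma esymm_le {ι : Type*} [DecidableEq ι] (b : ι → ℝ) (s : Finset ι) :
    ∀ (r : ℕ), (∀ i ∈ s, 0 ≤ b i) →
      ∑ A ∈ s.powersetCard r, ∏ i ∈ A, b i ≤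
        (s.card.choose r : ℝ) * ((∑ i ∈ s, b i) / s.card) ^ r := by
  induction s using Finset.induction_on with
  | empty =>
    intro r _
    cases r with
    | zero => simp
    | succ r => rw [show ((∅:Finset ι).powersetCard (r+1)) = ∅ from powersetCard_eq_empty.2 (by simp)]; simp
  | @insert x s hx ih =>
    intro r hb
    have hbs : ∀ i ∈ s, 0 ≤ b i := fun i hi => hb i (mem_insert_of_mem hi)
    have hbx : 0 ≤ b x := hb x (mem_insert_self x s)
    cases r with
    | zero => simp
    | succ m =>
      set n := s.card with hn
      have hcard : (insert x s).card = n + 1 := card_insert_of_notMem hx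
      have hsum : ∑ i ∈ insert x s, b i = b x + ∑ i ∈ s, b i := sum_insert hx
      rcases le_or_gt m n with hmn | hmn
      · -- main case
        have hdisj : Disjoint (s.powersetCard (m+1)) ((s.powersetCard m).image (insert x)) := by
          rw [disjoint_left]
          intro A hA hA'
          obtain ⟨hAs, -⟩ := mem_powersetCard.1 hA
          obtain ⟨B, hB, rfl⟩ := mem_image.1 hA'
          exact hx (hAs (mem_insert_self x B))
        have hinj : ∀ A ∈ s.powersetCard m, ∀ B ∈ s.powersetCard m,
            insert x A = insert x B → A = B := by
          intro A hA B hB hAB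
          obtain ⟨hAs, -⟩ := mem_powersetCard.1 hA
          obtain ⟨hBs, -⟩ := mem_powersetCard.1 hB
          have hxA : x ∉ A := fun h => hx (hAs h)
          have hxB : x ∉ B := fun h => hx (hBs h)
          have := congrArg (fun T => Finset.erase T x) hAB
          simpa [Finset.erase_insert hxA, Finset.erase_insert hxB] using this
        have himg : ∑ A ∈ (s.powersetCard m).image (insert x), ∏ i ∈ A, b i
            = b x * ∑ A ∈ s.powersetCard m, ∏ i ∈ A, b i := by
          rw [Finset.sum_image hinj, mul_sum]
          apply sum_congr rfl
          intro A hA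
          obtain ⟨hAs, -⟩ := mem_powersetCard.1 hA
          exact prod_insert (fun h => hx (hAs h))
        rw [Finset.powersetCard_succ_insert hx, Finset.sum_union hdisj, himg]
        set u : ℝ := (∑ i ∈ s, b i) / n with hudef
        have hu : 0 ≤ u := div_nonneg (sum_nonneg hbs) (by positivity)
        have hnu : (n:ℝ) * u = ∑ i ∈ s, b i := by
          rcases Nat.eq_zero_or_pos n with h0 | hpos
          · have : s = ∅ := card_eq_zero.1 (hn.symm.trans (by omega) )
            simp [hudef, this, h0]
          · rw [hudef]
            field_simp
        calc (∑ A ∈ s.powersetCard (m+1), ∏ i ∈ A, b i)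
              + b x * ∑ A ∈ s.powersetCard m, ∏ i ∈ A, b i
            ≤ (n.choose (m+1) : ℝ) * u ^ (m+1) + b x * ((n.choose m : ℝ) * u ^ m) := by
              apply add_le_add (ih (m+1) hbs)
              exact mul_le_mul_of_nonneg_left (ih m hbs) hbx
          _ = (n.choose (m+1) : ℝ) * u ^ (m+1) + (n.choose m : ℝ) * (b x) * u ^ m := by ring
          _ ≤ ((n+1).choose (m+1) : ℝ) * (((n:ℝ) * u + b x) / ((n:ℝ)+1)) ^ (m+1) :=
              stepineq n m hmn u (b x) hu hbx
          _ = ((insert x s).card.choose (m+1) : ℝ)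
                * ((∑ i ∈ insert x s, b i) / (insert x s).card) ^ (m+1) := by
              rw [hcard, hsum, hnu]
              push_cast
              ring_nf
      · -- degenerate case n < m
        have h1 : s.powersetCard (m+1) = ∅ := powersetCard_eq_empty.2 (by omega)
        have h2 : s.powersetCard m = ∅ := powersetCard_eq_empty.2 (by omega)
        have h3 : (insert x s).card.choose (m+1) = 0 := by
          rw [hcard]; exact Nat.choose_eq_zero_of_lt (by omega)
        rw [Finset.powersetCard_succ_insert hx, h1, h2]
        simp [h3]

lemma sum_perm_prod_eq {N : ℕ} (b : Fin N → ℝ) (A B : Finset (Fin N)) (h : A.card = B.card) :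
    ∑ π : Equiv.Perm (Fin N), ∏ i ∈ A, b (π i)
      = ∑ π : Equiv.Perm (Fin N), ∏ i ∈ B, b (π i) := by
  have e : {x // x ∈ A} ≃ {x // x ∈ B} := Finset.equivOfCardEq h
  set σ : Equiv.Perm (Fin N) := Equiv.extendSubtype e with hσ
  have hmem : ∀ i ∈ A, σ i ∈ B := fun i hi => Equiv.extendSubtype_mem e i hi
  have himg : A.image σ = B := by
    apply Finset.eq_of_subset_of_card_le
    · intro j hj
      obtain ⟨i, hi, rfl⟩ := mem_image.1 hj
      exact hmem i hi
    · rw [card_image_of_injective A σ.injective]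
      omega
  symm
  calc ∑ π : Equiv.Perm (Fin N), ∏ i ∈ B, b (π i)
      = ∑ π : Equiv.Perm (Fin N), ∏ i ∈ A.image σ, b (π i) := by rw [himg]
    _ = ∑ π : Equiv.Perm (Fin N), ∏ i ∈ A, b (π (σ i)) := by
        apply Finset.sum_congr rfl
        intro π _
        exact Finset.prod_image (fun i _ j _ hij => σ.injective hij)
    _ = ∑ π : Equiv.Perm (Fin N), ∏ i ∈ A, b (π i) := by
        exact Equiv.sum_comp (Equiv.mulRight σ) (fun π => ∏ i ∈ A, b (π i))

lemma esymm_perm_invariant {N : ℕ} (b : Fin N → ℝ) (π : Equiv.Perm (Fin N)) (r : ℕ) :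
    ∑ B ∈ (Finset.univ : Finset (Fin N)).powersetCard r, ∏ i ∈ B, b (π i)
      = ∑ B ∈ (Finset.univ : Finset (Fin N)).powersetCard r, ∏ i ∈ B, b i := by
  apply Finset.sum_nbij' (i := fun B => B.image π) (j := fun B => B.image π.symm)
  · intro B hB
    rw [mem_powersetCard] at hB ⊢
    exact ⟨subset_univ _, by rw [card_image_of_injective _ π.injective]; exact hB.2⟩
  · intro B hB
    rw [mem_powersetCard] at hB ⊢
    exact ⟨subset_univ _, by rw [card_image_of_injective _ π.symm.injective]; exact hB.2⟩
  · intro B _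
    rw [Finset.image_image]
    simp [Function.comp]
  · intro B _
    rw [Finset.image_image]
    simp [Function.comp]
  · intro B _
    exact (Finset.prod_image (fun i _ j _ hij => π.injective hij)).symm

lemma perm_prod_le {N : ℕ} (hN : 0 < N) (b : Fin N → ℝ) (hb : ∀ i, 0 ≤ b i)
    (A : Finset (Fin N)) :
    ∑ π : Equiv.Perm (Fin N), ∏ i ∈ A, b (π i)
      ≤ (N ! : ℝ) * ((∑ j, b j) / N) ^ A.card := by
  set r := A.card with hr
  have hrN : r ≤ N := by
    have := Finset.card_le_univ A
    simpa using this
  have hchoose : (0:ℝ) < (N.choose r : ℝ) := by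
    exact_mod_cast Nat.choose_pos hrN
  have key : (N.choose r : ℝ) * ∑ π : Equiv.Perm (Fin N), ∏ i ∈ A, b (π i)
      = (N ! : ℝ) * ∑ B ∈ (Finset.univ : Finset (Fin N)).powersetCard r, ∏ i ∈ B, b i := by
    have h1 : ∀ B ∈ (Finset.univ : Finset (Fin N)).powersetCard r,
        (∑ π : Equiv.Perm (Fin N), ∏ i ∈ B, b (π i))
          = ∑ π : Equiv.Perm (Fin N), ∏ i ∈ A, b (π i) := by
      intro B hB
      exact sum_perm_prod_eq b B A (((mem_powersetCard.1 hB).2).trans hr)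
    calc (N.choose r : ℝ) * ∑ π : Equiv.Perm (Fin N), ∏ i ∈ A, b (π i)
        = ∑ B ∈ (Finset.univ : Finset (Fin N)).powersetCard r,
            ∑ π : Equiv.Perm (Fin N), ∏ i ∈ B, b (π i) := by
          rw [Finset.sum_congr rfl h1, Finset.sum_const, nsmul_eq_mul,
            Finset.card_powersetCard]
          simp
      _ = ∑ π : Equiv.Perm (Fin N),
            ∑ B ∈ (Finset.univ : Finset (Fin N)).powersetCard r, ∏ i ∈ B, b (π i) :=
          Finset.sum_comm
      _ = ∑ π : Equiv.Perm (Fin N),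
            ∑ B ∈ (Finset.univ : Finset (Fin N)).powersetCard r, ∏ i ∈ B, b i := by
          exact Finset.sum_congr rfl (fun π _ => esymm_perm_invariant b π r)
      _ = (N ! : ℝ) * ∑ B ∈ (Finset.univ : Finset (Fin N)).powersetCard r, ∏ i ∈ B, b i := by
          rw [Finset.sum_const, nsmul_eq_mul]
          congr 1
          rw [Finset.card_univ, Fintype.card_perm, Fintype.card_fin]
  have hesymm : ∑ B ∈ (Finset.univ : Finset (Fin N)).powersetCard r, ∏ i ∈ B, b i
      ≤ (N.choose r : ℝ) * ((∑ j, b j) / N) ^ r := by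
    have := esymm_le b Finset.univ r (fun i _ => hb i)
    simpa using this
  have : (N.choose r : ℝ) * ∑ π : Equiv.Perm (Fin N), ∏ i ∈ A, b (π i)
      ≤ (N.choose r : ℝ) * ((N ! : ℝ) * ((∑ j, b j) / N) ^ r) := by
    rw [key]
    calc (N ! : ℝ) * ∑ B ∈ (Finset.univ : Finset (Fin N)).powersetCard r, ∏ i ∈ B, b i
        ≤ (N ! : ℝ) * ((N.choose r : ℝ) * ((∑ j, b j) / N) ^ r) := by
          apply mul_le_mul_of_nonneg_left hesymm (by positivity)
      _ = (N.choose r : ℝ) * ((N ! : ℝ) * ((∑ j, b j) / N) ^ r) := by ring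
  exact le_of_mul_le_mul_left this hchoose

lemma prod_le_prod_image {N k : ℕ} (c : Fin N → ℝ) (hc0 : ∀ i, 0 ≤ c i)
    (hc1 : ∀ i, c i ≤ 1) (f : Fin k → Fin N) :
    ∏ l : Fin k, c (f l) ≤ ∏ i ∈ Finset.univ.image f, c i := by
  rw [Finset.prod_comp c f]
  apply Finset.prod_le_prod
  · intro i _
    exact pow_nonneg (hc0 i) _
  · intro i hi
    apply pow_le_of_le_one (hc0 i) (hc1 i)
    obtain ⟨l, _, rfl⟩ := mem_image.1 hi
    have : l ∈ Finset.univ.filter (fun x => f x = f l) := by simp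
    exact Finset.card_ne_zero_of_mem this

lemma image_cons {N k : ℕ} (i₀ : Fin N) (f : Fin k → Fin N) :
    Finset.univ.image (Fin.cons i₀ f : Fin (k+1) → Fin N)
      = insert i₀ (Finset.univ.image f) := by
  ext j
  simp only [mem_image, mem_insert, mem_univ, true_and]
  constructor
  · rintro ⟨l, rfl⟩
    refine Fin.cases ?_ ?_ l
    · left; rfl
    · intro l'; right; exact ⟨l', rfl⟩
  · rintro (rfl | ⟨l', rfl⟩)
    · exact ⟨0, rfl⟩
    · exact ⟨l'.succ, by simp⟩

lemma psi_le {N : ℕ} (a : Fin N → ℝ) (ha0 : ∀ i, 0 ≤ a i) (m : ℝ) (hm : 0 ≤ m) :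
    ∀ k : ℕ, ∑ f : Fin k → Fin N, (∏ i ∈ Finset.univ.image f, a i) * m ^ (Finset.univ.image f).card
      ≤ ∏ l ∈ Finset.range k, ((l:ℝ) + (∑ j, a j) * m) := by
  intro k
  induction k with
  | zero => simp
  | succ k ih =>
    have hSa : 0 ≤ (∑ j, a j) := Finset.sum_nonneg (fun j _ => ha0 j)
    calc ∑ f : Fin (k+1) → Fin N, (∏ i ∈ Finset.univ.image f, a i) * m ^ (Finset.univ.image f).card
        = ∑ p : Fin N × (Fin k → Fin N),
            (∏ i ∈ Finset.univ.image (Fin.cons p.1 p.2 : Fin (k+1) → Fin N), a i)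
              * m ^ (Finset.univ.image (Fin.cons p.1 p.2 : Fin (k+1) → Fin N)).card := by
          exact (Fintype.sum_equiv (Fin.consEquiv (fun _ => Fin N))
            (fun p => _) (fun f => (∏ i ∈ Finset.univ.image f, a i) * m ^ (Finset.univ.image f).card)
            (fun p => rfl)).symm
      _ = ∑ f : Fin k → Fin N, ∑ i₀ : Fin N,
            (∏ i ∈ insert i₀ (Finset.univ.image f), a i)
              * m ^ (insert i₀ (Finset.univ.image f)).card := by
          rw [Fintype.sum_prod_type]
          rw [Finset.sum_comm]
          apply Finset.sum_congr rfl
          intro f _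
          apply Finset.sum_congr rfl
          intro i₀ _
          rw [image_cons]
      _ ≤ ∑ f : Fin k → Fin N,
            ((k:ℝ) + (∑ j, a j) * m) * ((∏ i ∈ Finset.univ.image f, a i) * m ^ (Finset.univ.image f).card) := by
          apply Finset.sum_le_sum
          intro f _
          set R := Finset.univ.image f with hR
          set r := R.card with hrdef
          have hrk : r ≤ k := by
            calc r ≤ (Finset.univ : Finset (Fin k)).card := Finset.card_image_le
              _ = k := by simp
          have hT0 : 0 ≤ (∏ i ∈ R, a i) * m ^ r := by
            apply mul_nonneg (Finset.prod_nonneg (fun i _ => ha0 i)) (by positivity)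
          rw [← Finset.sum_sdiff (Finset.subset_univ R)]
          have h1 : ∑ i₀ ∈ R, (∏ i ∈ insert i₀ R, a i) * m ^ (insert i₀ R).card
              = (r:ℝ) * ((∏ i ∈ R, a i) * m ^ r) := by
            rw [Finset.sum_congr rfl (fun i₀ hi₀ => by
              rw [Finset.insert_eq_self.2 hi₀]), Finset.sum_const, nsmul_eq_mul]
          have h2 : ∑ i₀ ∈ Finset.univ \ R, (∏ i ∈ insert i₀ R, a i) * m ^ (insert i₀ R).card
              = (∑ i₀ ∈ Finset.univ \ R, a i₀) * m * ((∏ i ∈ R, a i) * m ^ r) := by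
            rw [Finset.sum_mul, Finset.sum_mul]
            apply Finset.sum_congr rfl
            intro i₀ hi₀
            have hni : i₀ ∉ R := (Finset.mem_sdiff.1 hi₀).2
            rw [Finset.prod_insert hni, Finset.card_insert_of_notMem hni]
            ring
          rw [h2, h1]
          have hsub : ∑ i₀ ∈ Finset.univ \ R, a i₀ ≤ ∑ j, a j := by
            apply Finset.sum_le_sum_of_subset_of_nonneg (Finset.sdiff_subset)
            intro i _ _
            exact ha0 i
          have hrk' : (r:ℝ) ≤ (k:ℝ) := by exact_mod_cast hrk
          nlinarith [mul_le_mul_of_nonneg_right (mul_le_mul_of_nonneg_right hsub hm) hT0,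
            mul_le_mul_of_nonneg_right hrk' hT0]
      _ = ((k:ℝ) + (∑ j, a j) * m) * ∑ f : Fin k → Fin N,
            ((∏ i ∈ Finset.univ.image f, a i) * m ^ (Finset.univ.image f).card) := by
          rw [Finset.mul_sum]
      _ ≤ ((k:ℝ) + (∑ j, a j) * m) * ∏ l ∈ Finset.range k, ((l:ℝ) + (∑ j, a j) * m) := by
          apply mul_le_mul_of_nonneg_left ih (by positivity)
      _ = ∏ l ∈ Finset.range (k+1), ((l:ℝ) + (∑ j, a j) * m) := by
          rw [Finset.prod_range_succ]
          ring

lemma moment {N : ℕ} (hN : 0 < N) (a b : Fin N → ℝ)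
    (ha0 : ∀ i, 0 ≤ a i) (ha1 : ∀ i, a i ≤ 1)
    (hb0 : ∀ i, 0 ≤ b i) (hb1 : ∀ i, b i ≤ 1) (k : ℕ) :
    ∑ π : Equiv.Perm (Fin N), (∑ j, a j * b (π j)) ^ k
      ≤ (N ! : ℝ) * ∏ l ∈ Finset.range k, ((l:ℝ) + (∑ j, a j) * ((∑ j, b j) / N)) := by
  have hexp : ∀ π : Equiv.Perm (Fin N),
      (∑ j, a j * b (π j)) ^ k = ∑ f : Fin k → Fin N, ∏ l : Fin k, (a (f l) * b (π (f l))) := by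
    intro π
    calc (∑ j, a j * b (π j)) ^ k
        = ∏ _l : Fin k, (∑ j, a j * b (π j)) := by
          rw [Finset.prod_const, Finset.card_univ, Fintype.card_fin]
      _ = ∑ f ∈ Fintype.piFinset (fun _ => Finset.univ),
            ∏ l : Fin k, (a (f l) * b (π (f l))) :=
          Finset.prod_univ_sum (fun _ => Finset.univ) (fun _ j => a j * b (π j))
      _ = ∑ f : Fin k → Fin N, ∏ l : Fin k, (a (f l) * b (π (f l))) := by
          rw [Fintype.piFinset_univ]
  have hm : (0:ℝ) ≤ (∑ j, b j) / (N:ℝ) :=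
    div_nonneg (Finset.sum_nonneg fun j _ => hb0 j) (Nat.cast_nonneg N)
  calc ∑ π : Equiv.Perm (Fin N), (∑ j, a j * b (π j)) ^ k
      = ∑ π : Equiv.Perm (Fin N), ∑ f : Fin k → Fin N, ∏ l : Fin k, (a (f l) * b (π (f l))) :=
        Finset.sum_congr rfl (fun π _ => hexp π)
    _ = ∑ f : Fin k → Fin N, ∑ π : Equiv.Perm (Fin N), ∏ l : Fin k, (a (f l) * b (π (f l))) :=
        Finset.sum_comm
    _ ≤ ∑ f : Fin k → Fin N, (∏ i ∈ Finset.univ.image f, a i)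
          * ((N ! : ℝ) * ((∑ j, b j) / N) ^ (Finset.univ.image f).card) := by
        apply Finset.sum_le_sum
        intro f _
        have hprodA : (0:ℝ) ≤ ∏ i ∈ Finset.univ.image f, a i :=
          Finset.prod_nonneg fun i _ => ha0 i
        calc ∑ π : Equiv.Perm (Fin N), ∏ l : Fin k, (a (f l) * b (π (f l)))
            ≤ ∑ π : Equiv.Perm (Fin N),
                ((∏ i ∈ Finset.univ.image f, a i) * ∏ i ∈ Finset.univ.image f, b (π i)) := by
              apply Finset.sum_le_sum
              intro π _
              have h := prod_le_prod_image (fun i => a i * b (π i))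
                (fun i => mul_nonneg (ha0 i) (hb0 (π i)))
                (fun i => mul_le_one₀ (ha1 i) (hb0 (π i)) (hb1 (π i))) f
              calc ∏ l : Fin k, (a (f l) * b (π (f l)))
                  ≤ ∏ i ∈ Finset.univ.image f, (a i * b (π i)) := h
                _ = (∏ i ∈ Finset.univ.image f, a i) * ∏ i ∈ Finset.univ.image f, b (π i) :=
                    Finset.prod_mul_distrib
          _ = (∏ i ∈ Finset.univ.image f, a i)
                * ∑ π : Equiv.Perm (Fin N), ∏ i ∈ Finset.univ.image f, b (π i) := by
              rw [← Finset.mul_sum]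
          _ ≤ (∏ i ∈ Finset.univ.image f, a i)
                * ((N ! : ℝ) * ((∑ j, b j) / N) ^ (Finset.univ.image f).card) :=
              mul_le_mul_of_nonneg_left (perm_prod_le hN b hb0 _) hprodA
    _ = (N ! : ℝ) * ∑ f : Fin k → Fin N, (∏ i ∈ Finset.univ.image f, a i)
          * ((∑ j, b j) / N) ^ (Finset.univ.image f).card := by
        rw [Finset.mul_sum]
        apply Finset.sum_congr rfl
        intro f _
        ring
    _ ≤ (N ! : ℝ) * ∏ l ∈ Finset.range k, ((l:ℝ) + (∑ j, a j) * ((∑ j, b j) / N)) := by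
        apply mul_le_mul_of_nonneg_left (psi_le a ha0 _ hm k) (Nat.cast_nonneg _)

lemma core {N : ℕ} (hN : 0 < N) (C γ : ℝ) (hC : 1 ≤ C) (hγ : 0 < γ)
    (a b : Fin N → ℝ)
    (ha0 : ∀ i, 0 ≤ a i) (ha1 : ∀ i, a i ≤ 1)
    (hb0 : ∀ i, 0 ≤ b i) (hb1 : ∀ i, b i ≤ 1)
    (hCN : C * N ≤ (∑ j, a j) * (∑ j, b j)) :
    ((Finset.univ.filter (fun π : Equiv.Perm (Fin N) =>
        Real.exp γ * ((∑ j, a j) * (∑ j, b j) / N) ≤ ∑ j, a j * b (π j))).card : ℝ)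
      ≤ (N ! : ℝ) * ((N:ℝ)^2 * Real.exp (-(γ^2*C)/2)) := by
  have hNR : (0:ℝ) < N := by exact_mod_cast hN
  set m : ℝ := (∑ j, a j) * (∑ j, b j) / N with hmdef
  have hmC : C ≤ m := by
    rw [hmdef, le_div_iff₀ hNR]
    exact hCN
  have hm0 : 0 < m := lt_of_lt_of_le (by linarith) hmC
  set k : ℕ := ⌈γ * C⌉₊ with hkdef
  have hγC : 0 < γ * C := by positivity
  have hk1 : γ * C ≤ (k:ℝ) := Nat.le_ceil _
  have hk2 : (k:ℝ) < γ * C + 1 := Nat.ceil_lt_add_one (le_of_lt hγC)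
  set t : ℝ := Real.exp γ * m with htdef
  have ht : 0 < t := by positivity
  set F := Finset.univ.filter (fun π : Equiv.Perm (Fin N) =>
      Real.exp γ * ((∑ j, a j) * (∑ j, b j) / N) ≤ ∑ j, a j * b (π j)) with hF
  -- Markov
  have hmarkov : (F.card : ℝ) * t ^ k ≤ ∑ π : Equiv.Perm (Fin N), (∑ j, a j * b (π j)) ^ k := by
    calc (F.card : ℝ) * t ^ k = ∑ _π ∈ F, t ^ k := by
          rw [Finset.sum_const, nsmul_eq_mul]
      _ ≤ ∑ π ∈ F, (∑ j, a j * b (π j)) ^ k := by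
          apply Finset.sum_le_sum
          intro π hπ
          have hπ' : t ≤ ∑ j, a j * b (π j) := by
            have := (Finset.mem_filter.1 hπ).2
            rw [htdef, hmdef]
            exact this
          exact pow_le_pow_left₀ ht.le hπ' k
      _ ≤ ∑ π : Equiv.Perm (Fin N), (∑ j, a j * b (π j)) ^ k := by
          apply Finset.sum_le_sum_of_subset_of_nonneg (Finset.filter_subset _ _)
          intro π _ _
          apply pow_nonneg
          exact Finset.sum_nonneg fun j _ => mul_nonneg (ha0 j) (hb0 (π j))
  -- factor bound
  have hfactor : ∀ l ∈ Finset.range k, (0:ℝ) ≤ (l:ℝ) + (∑ j, a j) * ((∑ j, b j) / N)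
      ∧ (l:ℝ) + (∑ j, a j) * ((∑ j, b j) / N) ≤ t * Real.exp ((l:ℝ)/C - γ) := by
    intro l _
    have hl0 : (0:ℝ) ≤ (l:ℝ) := Nat.cast_nonneg l
    have hmm : (∑ j, a j) * ((∑ j, b j) / N) = m := by
      rw [hmdef]; ring
    constructor
    · rw [hmm]; positivity
    · rw [hmm]
      have h1 : (l:ℝ) + m ≤ m * (1 + (l:ℝ)/C) := by
        have hCpos : (0:ℝ) < C := by linarith
        rw [mul_add, mul_one]
        have : (l:ℝ) ≤ m * ((l:ℝ)/C) := by
          rw [mul_div_assoc']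
          rw [le_div_iff₀ hCpos]
          nlinarith
        linarith
      have h2 : (1:ℝ) + (l:ℝ)/C ≤ Real.exp ((l:ℝ)/C) := by
        have := Real.add_one_le_exp ((l:ℝ)/C)
        linarith
      have h3 : m * (1 + (l:ℝ)/C) ≤ m * Real.exp ((l:ℝ)/C) :=
        mul_le_mul_of_nonneg_left h2 hm0.le
      have h4 : t * Real.exp ((l:ℝ)/C - γ) = m * Real.exp ((l:ℝ)/C) := by
        rw [htdef, Real.exp_sub]
        field_simp [Real.exp_ne_zero]
      rw [h4]
      linarith
  have hprod : ∏ l ∈ Finset.range k, ((l:ℝ) + (∑ j, a j) * ((∑ j, b j) / N))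
      ≤ t ^ k * Real.exp (∑ l ∈ Finset.range k, ((l:ℝ)/C - γ)) := by
    calc ∏ l ∈ Finset.range k, ((l:ℝ) + (∑ j, a j) * ((∑ j, b j) / N))
        ≤ ∏ l ∈ Finset.range k, (t * Real.exp ((l:ℝ)/C - γ)) := by
          apply Finset.prod_le_prod
          · intro l hl; exact (hfactor l hl).1
          · intro l hl; exact (hfactor l hl).2
      _ = t ^ k * ∏ l ∈ Finset.range k, Real.exp ((l:ℝ)/C - γ) := by
          rw [Finset.prod_mul_distrib, Finset.prod_const, Finset.card_range]
      _ = t ^ k * Real.exp (∑ l ∈ Finset.range k, ((l:ℝ)/C - γ)) := by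
          rw [Real.exp_sum]
  -- exponent bound
  have hexp : ∑ l ∈ Finset.range k, ((l:ℝ)/C - γ) ≤ -(γ^2*C)/2 := by
    have hCpos : (0:ℝ) < C := by linarith
    have hsum : ∑ l ∈ Finset.range k, (l:ℝ) = (k:ℝ) * ((k:ℝ) - 1) / 2 := by
      have h := Finset.sum_range_id_mul_two k
      have h' : ((∑ l ∈ Finset.range k, l) * 2 : ℕ) = (k * (k-1) : ℕ) := h
      rcases Nat.eq_zero_or_pos k with hk0 | hkpos
      · simp [hk0]
      · have hcast : ((k * (k-1) : ℕ) : ℝ) = (k:ℝ) * ((k:ℝ) - 1) := by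
          push_cast [Nat.cast_sub hkpos]
          ring
        have hc1 : ((∑ l ∈ Finset.range k, l : ℕ) : ℝ) = ∑ l ∈ Finset.range k, (l:ℝ) := by
          push_cast
          rfl
        have hc2 : ((∑ l ∈ Finset.range k, l : ℕ) : ℝ) * 2 = ((k*(k-1) : ℕ) : ℝ) := by
          exact_mod_cast congrArg (fun x : ℕ => (x:ℝ)) h'
        rw [hc1, hcast] at hc2
        linarith
    rw [Finset.sum_sub_distrib, Finset.sum_const, Finset.card_range, ← Finset.sum_div, hsum,
      nsmul_eq_mul]
    set x : ℝ := (k:ℝ) with hx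
    have hδ0 : 0 ≤ x - γ*C := by linarith
    have hδ1 : x - γ*C ≤ 1 := by linarith
    have hδ : (x - γ*C) * (1 - (x - γ*C)) ≥ 0 := mul_nonneg hδ0 (by linarith)
    rw [sub_le_iff_le_add, div_le_iff₀ hCpos]
    nlinarith [hδ, hγC]
  -- assemble
  have hE : Real.exp (∑ l ∈ Finset.range k, ((l:ℝ)/C - γ)) ≤ Real.exp (-(γ^2*C)/2) :=
    Real.exp_le_exp.2 hexp
  have hfin : (F.card : ℝ) * t ^ k ≤ ((N ! : ℝ) * Real.exp (-(γ^2*C)/2)) * t ^ k := by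
    calc (F.card : ℝ) * t ^ k ≤ ∑ π : Equiv.Perm (Fin N), (∑ j, a j * b (π j)) ^ k := hmarkov
      _ ≤ (N ! : ℝ) * ∏ l ∈ Finset.range k, ((l:ℝ) + (∑ j, a j) * ((∑ j, b j) / N)) :=
          moment hN a b ha0 ha1 hb0 hb1 k
      _ ≤ (N ! : ℝ) * (t ^ k * Real.exp (∑ l ∈ Finset.range k, ((l:ℝ)/C - γ))) := by
          apply mul_le_mul_of_nonneg_left hprod (Nat.cast_nonneg _)
      _ ≤ (N ! : ℝ) * (t ^ k * Real.exp (-(γ^2*C)/2)) := by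
          apply mul_le_mul_of_nonneg_left _ (Nat.cast_nonneg _)
          exact mul_le_mul_of_nonneg_left hE (by positivity)
      _ = ((N ! : ℝ) * Real.exp (-(γ^2*C)/2)) * t ^ k := by ring
  have h5 : (F.card : ℝ) ≤ (N ! : ℝ) * Real.exp (-(γ^2*C)/2) :=
    le_of_mul_le_mul_right hfin (pow_pos ht k)
  calc (F.card : ℝ) ≤ (N ! : ℝ) * Real.exp (-(γ^2*C)/2) := h5
    _ ≤ (N ! : ℝ) * ((N:ℝ)^2 * Real.exp (-(γ^2*C)/2)) := by
        have h1N : (1:ℝ) ≤ (N:ℝ)^2 := by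
          have : (1:ℝ) ≤ (N:ℝ) := by exact_mod_cast hN
          nlinarith
        have he : (0:ℝ) < Real.exp (-(γ^2*C)/2) := Real.exp_pos _
        have : Real.exp (-(γ^2*C)/2) ≤ (N:ℝ)^2 * Real.exp (-(γ^2*C)/2) :=
          le_mul_of_one_le_left he.le h1N
        apply mul_le_mul_of_nonneg_left this (Nat.cast_nonneg _)

/-- The ℓ¹ norm of a vector. -/
noncomputable def nl1 {N : ℕ} (u : Fin N → ℝ) : ℝ := ∑ i, |u i|

/-- The ℓ∞ norm of a vector. -/
noncomputable def nlinf {N : ℕ} (u : Fin N → ℝ) : ℝ := ⨆ i, |u i|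

theorem stmt8 (N : ℕ) (C γ : ℝ) (hC : 1 ≤ C) (hγ : 0 < γ)
    (u v : Fin N → ℝ) (hu : ∀ i, 0 ≤ u i) (hv : ∀ i, 0 ≤ v i)
    (hu0 : u ≠ 0) (hv0 : v ≠ 0)
    (hratio : C * N ≤ (nl1 u / nlinf u) * (nl1 v / nlinf v))
    (D : Matrix (Fin N) (Fin N) ℝ) (hD0 : ∀ i j, 0 ≤ D i j)
    (hDrow : ∀ i, ∑ j, D i j = 1) (hDcol : ∀ j, ∑ i, D i j = 1) :
    ((Finset.univ.filter (fun τ : Equiv.Perm (Fin N) =>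
          Real.exp γ * (nl1 u * nl1 v / N) ≤
            ∑ i, ∑ j ∈ Finset.univ.erase i, D i j * (u i * v (τ j)))).card : ℝ) /
        (Fintype.card (Equiv.Perm (Fin N)) : ℝ) ≤
      (N : ℝ) ^ 2 * Real.exp (-(γ ^ 2 * C) / 2) := by
  rcases Nat.eq_zero_or_pos N with h0 | hN
  · exfalso
    apply hu0
    funext i
    exact absurd i.isLt (by omega)
  have hbdd : ∀ (x : Fin N → ℝ), BddAbove (Set.range fun i => |x i|) :=
    fun x => (Set.finite_range _).bddAbove
  have hNe : Nonempty (Fin N) := ⟨⟨0, hN⟩⟩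
  -- positivity of sup norms
  have hinf_pos : ∀ (x : Fin N → ℝ), x ≠ 0 → 0 < nlinf x := by
    intro x hx
    obtain ⟨i, hi⟩ := Function.ne_iff.1 hx
    have h1 : 0 < |x i| := abs_pos.2 (by simpa using hi)
    exact lt_of_lt_of_le h1 (le_ciSup (hbdd x) i)
  have hα := hinf_pos u hu0
  have hβ := hinf_pos v hv0
  have hui : ∀ i, u i ≤ nlinf u := fun i => (le_abs_self _).trans (le_ciSup (hbdd u) i)
  have hvi : ∀ i, v i ≤ nlinf v := fun i => (le_abs_self _).trans (le_ciSup (hbdd v) i)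
  set w : Fin N → ℝ := fun j => ∑ i, D i j * u i with hw
  set a : Fin N → ℝ := fun j => w j / nlinf u with ha
  set b : Fin N → ℝ := fun j => v j / nlinf v with hb
  have hw0 : ∀ j, 0 ≤ w j := fun j => Finset.sum_nonneg fun i _ => mul_nonneg (hD0 i j) (hu i)
  have hw1 : ∀ j, w j ≤ nlinf u := by
    intro j
    calc w j ≤ ∑ i, D i j * nlinf u :=
          Finset.sum_le_sum fun i _ => mul_le_mul_of_nonneg_left (hui i) (hD0 i j)
      _ = (∑ i, D i j) * nlinf u := by rw [Finset.sum_mul]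
      _ = nlinf u := by rw [hDcol j, one_mul]
  have ha0 : ∀ j, 0 ≤ a j := fun j => div_nonneg (hw0 j) hα.le
  have ha1 : ∀ j, a j ≤ 1 := fun j => (div_le_one hα).2 (hw1 j)
  have hb0 : ∀ j, 0 ≤ b j := fun j => div_nonneg (hv j) hβ.le
  have hb1 : ∀ j, b j ≤ 1 := fun j => (div_le_one hβ).2 (hvi j)
  have hsumw : ∑ j, w j = nl1 u := by
    rw [hw]
    calc ∑ j, ∑ i, D i j * u i = ∑ i, ∑ j, D i j * u i := Finset.sum_comm
      _ = ∑ i, u i := by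
          apply Finset.sum_congr rfl
          intro i _
          rw [← Finset.sum_mul, hDrow i, one_mul]
      _ = nl1 u := by
          rw [nl1]
          exact (Finset.sum_congr rfl fun i _ => (abs_of_nonneg (hu i)).symm)
  have hsa : ∑ j, a j = nl1 u / nlinf u := by
    rw [ha]
    rw [← Finset.sum_div, hsumw]
  have hsb : ∑ j, b j = nl1 v / nlinf v := by
    rw [hb]
    rw [← Finset.sum_div]
    congr 1
    rw [nl1]
    exact Finset.sum_congr rfl fun i _ => (abs_of_nonneg (hv i)).symm
  have hCN : C * N ≤ (∑ j, a j) * (∑ j, b j) := by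
    rw [hsa, hsb]; exact hratio
  -- event inclusion
  have hsubset : (Finset.univ.filter (fun τ : Equiv.Perm (Fin N) =>
        Real.exp γ * (nl1 u * nl1 v / N) ≤
          ∑ i, ∑ j ∈ Finset.univ.erase i, D i j * (u i * v (τ j))))
      ⊆ (Finset.univ.filter (fun π : Equiv.Perm (Fin N) =>
        Real.exp γ * ((∑ j, a j) * (∑ j, b j) / N) ≤ ∑ j, a j * b (π j))) := by
    intro τ hτ
    rw [Finset.mem_filter] at hτ ⊢
    refine ⟨Finset.mem_univ τ, ?_⟩
    have hev := hτ.2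
    have hstep1 : ∑ i, ∑ j ∈ Finset.univ.erase i, D i j * (u i * v (τ j))
        ≤ ∑ j, w j * v (τ j) := by
      calc ∑ i, ∑ j ∈ Finset.univ.erase i, D i j * (u i * v (τ j))
          ≤ ∑ i, ∑ j, D i j * (u i * v (τ j)) := by
            apply Finset.sum_le_sum
            intro i _
            apply Finset.sum_le_sum_of_subset_of_nonneg (Finset.erase_subset _ _)
            intro j _ _
            exact mul_nonneg (hD0 i j) (mul_nonneg (hu i) (hv (τ j)))
        _ = ∑ j, ∑ i, D i j * (u i * v (τ j)) := Finset.sum_comm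
        _ = ∑ j, w j * v (τ j) := by
            apply Finset.sum_congr rfl
            intro j _
            rw [hw, Finset.sum_mul]
            exact Finset.sum_congr rfl fun i _ => by ring
    have hwv : ∑ j, w j * v (τ j) = (nlinf u * nlinf v) * ∑ j, a j * b (τ j) := by
      rw [Finset.mul_sum]
      apply Finset.sum_congr rfl
      intro j _
      rw [ha, hb]
      field_simp
    have hthr : Real.exp γ * (nl1 u * nl1 v / N)
        = (nlinf u * nlinf v) * (Real.exp γ * ((∑ j, a j) * (∑ j, b j) / N)) := by
      rw [hsa, hsb]
      field_simp
    have : (nlinf u * nlinf v) * (Real.exp γ * ((∑ j, a j) * (∑ j, b j) / N))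
        ≤ (nlinf u * nlinf v) * ∑ j, a j * b (τ j) := by
      rw [← hthr, ← hwv]
      exact hev.trans hstep1
    exact le_of_mul_le_mul_left this (by positivity)
  have hcards := Finset.card_le_card hsubset
  have hcore := core hN C γ hC hγ a b ha0 ha1 hb0 hb1 hCN
  have hfact : (Fintype.card (Equiv.Perm (Fin N)) : ℝ) = (N ! : ℝ) := by
    rw [Fintype.card_perm, Fintype.card_fin]
  rw [hfact, div_le_iff₀ (by exact_mod_cast Nat.factorial_pos N)]
  calc ((Finset.univ.filter (fun τ : Equiv.Perm (Fin N) =>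
          Real.exp γ * (nl1 u * nl1 v / N) ≤
            ∑ i, ∑ j ∈ Finset.univ.erase i, D i j * (u i * v (τ j)))).card : ℝ)
      ≤ ((Finset.univ.filter (fun π : Equiv.Perm (Fin N) =>
          Real.exp γ * ((∑ j, a j) * (∑ j, b j) / N) ≤ ∑ j, a j * b (π j))).card : ℝ) := by
        exact_mod_cast hcards
    _ ≤ (N ! : ℝ) * ((N:ℝ)^2 * Real.exp (-(γ^2*C)/2)) := hcore
    _ = (N:ℝ)^2 * Real.exp (-(γ^2*C)/2) * (N ! : ℝ) := by ring
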